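/- arXiv:2306.06387 — 4 statements merged into one kernel-verified Lean document; each statement's English description precedes it below -/
import Mathlib

section
/- Let X be a compact Hausdorff topological space and let A be a set of continuous real-valued functions on X satisfying: (i) A is a ℚ-linear subspace of C(X,ℝ), i.e. closed under pointwise addition and under multiplication by rational scalars; (ii) the constant function 1 belongs to A; (iii) A separates points, i.e. for any two distinct points x, y ∈ X there exists f ∈ A with f(x) ≠ f(y); (iv) A is closed under pointwise minimum, i.e. if f, g ∈ A then the function x ↦ min{f(x), g(x)} belongs to A. Then A is dense in C(X,ℝ) with respect to the uniform (supremum) norm. -/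
private lemma closure_closed_under_inf {X : Type*} [TopologicalSpace X] [CompactSpace X]
    (S : Set C(X, ℝ)) (hS : ∀ f ∈ S, ∀ g ∈ S, f ⊓ g ∈ S) :
    ∀ f ∈ closure S, ∀ g ∈ closure S, f ⊓ g ∈ closure S := by
  intro f hf g hg
  rw [Metric.mem_closure_iff] at hf hg ⊢
  intro ε hε
  obtain ⟨f', hf', hdf⟩ := hf ε hε
  obtain ⟨g', hg', hdg⟩ := hg ε hε
  refine ⟨f' ⊓ g', hS f' hf' g' hg', ?_⟩
  have h1 : dist (f ⊓ g) (f' ⊓ g') ≤ max (dist f f') (dist g g') := by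
    rw [ContinuousMap.dist_le (le_trans dist_nonneg (le_max_left _ _))]
    intro x
    calc dist ((f ⊓ g) x) ((f' ⊓ g') x) = |min (f x) (g x) - min (f' x) (g' x)| := by
          simp [Real.dist_eq]
      _ ≤ max |f x - f' x| |g x - g' x| := abs_min_sub_min_le_max _ _ _ _
      _ ≤ max (dist f f') (dist g g') := by
          refine max_le_max ?_ ?_
          · rw [← Real.dist_eq]; exact ContinuousMap.dist_apply_le_dist x
          · rw [← Real.dist_eq]; exact ContinuousMap.dist_apply_le_dist x
  exact lt_of_le_of_lt h1 (max_lt hdf hdg)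

private lemma closure_closed_under_sup {X : Type*} [TopologicalSpace X] [CompactSpace X]
    (S : Set C(X, ℝ)) (hS : ∀ f ∈ S, ∀ g ∈ S, f ⊔ g ∈ S) :
    ∀ f ∈ closure S, ∀ g ∈ closure S, f ⊔ g ∈ closure S := by
  intro f hf g hg
  rw [Metric.mem_closure_iff] at hf hg ⊢
  intro ε hε
  obtain ⟨f', hf', hdf⟩ := hf ε hε
  obtain ⟨g', hg', hdg⟩ := hg ε hε
  refine ⟨f' ⊔ g', hS f' hf' g' hg', ?_⟩
  have h1 : dist (f ⊔ g) (f' ⊔ g') ≤ max (dist f f') (dist g g') := by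
    rw [ContinuousMap.dist_le (le_trans dist_nonneg (le_max_left _ _))]
    intro x
    calc dist ((f ⊔ g) x) ((f' ⊔ g') x) = |max (f x) (g x) - max (f' x) (g' x)| := by
          simp [Real.dist_eq]
      _ ≤ max |f x - f' x| |g x - g' x| := abs_max_sub_max_le_max _ _ _ _
      _ ≤ max (dist f f') (dist g g') := by
          refine max_le_max ?_ ?_
          · rw [← Real.dist_eq]; exact ContinuousMap.dist_apply_le_dist x
          · rw [← Real.dist_eq]; exact ContinuousMap.dist_apply_le_dist x
  exact lt_of_le_of_lt h1 (max_lt hdf hdg)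

/-- **Rational Stone–Weierstrass for min-closed lattices.**
Let `X` be a compact Hausdorff space and `A ⊆ C(X, ℝ)` a ℚ-linear subspace
(closed under addition and rational scalar multiplication) containing the
constant function `1`, separating points, and closed under pointwise minimum.
Then `A` is dense in `C(X, ℝ)` for the uniform norm. -/
theorem rational_stone_weierstrass_min
    (X : Type*) [TopologicalSpace X] [CompactSpace X] [T2Space X]
    (A : Set C(X, ℝ))
    (hadd : ∀ f ∈ A, ∀ g ∈ A, f + g ∈ A)
    (hsmul : ∀ (q : ℚ), ∀ f ∈ A, (q : ℝ) • f ∈ A)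
    (hone : (1 : C(X, ℝ)) ∈ A)
    (hsep : ∀ x y : X, x ≠ y → ∃ f ∈ A, f x ≠ f y)
    (hmin : ∀ f ∈ A, ∀ g ∈ A, f ⊓ g ∈ A) :
    Dense A := by
  set B := closure A with hB
  -- A is closed under sup, via max a b = a + b - min a b
  have hmax : ∀ f ∈ A, ∀ g ∈ A, f ⊔ g ∈ A := by
    intro f hf g hg
    have : f ⊔ g = (f + g) + ((-1 : ℚ) : ℝ) • (f ⊓ g) := by
      ext x
      simp [max_def, min_def]
      split_ifs <;> ring_nf
    rw [this]
    exact hadd _ (hadd f hf g hg) _ (hsmul (-1) _ (hmin f hf g hg))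
  -- B is closed under add
  have hBadd : ∀ f ∈ B, ∀ g ∈ B, f + g ∈ B := fun f hf g hg =>
    map_mem_closure₂ continuous_add hf hg hadd
  -- B is closed under real smul
  have hBsmul : ∀ (r : ℝ), ∀ f ∈ B, r • f ∈ B := by
    intro r f hf
    have hr : r ∈ closure (Set.range ((↑) : ℚ → ℝ)) := by
      rw [Rat.denseRange_cast.closure_range]; trivial
    have hc : Continuous fun p : ℝ × C(X, ℝ) => p.1 • p.2 := continuous_smul
    exact map_mem_closure₂ hc hr hf (u := A)
      (fun a ha b hb => by
        obtain ⟨q, rfl⟩ := ha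
        exact hsmul q b hb)
  have hBinf : ∀ f ∈ B, ∀ g ∈ B, f ⊓ g ∈ B := closure_closed_under_inf A hmin
  have hBsup : ∀ f ∈ B, ∀ g ∈ B, f ⊔ g ∈ B := closure_closed_under_sup A hmax
  have hBone : (1 : C(X, ℝ)) ∈ B := subset_closure hone
  have hBconst : ∀ r : ℝ, (r : ℝ) • (1 : C(X, ℝ)) ∈ B := fun r => hBsmul r _ hBone
  -- B separates points strongly
  have hBsep : B.SeparatesPointsStrongly := by
    intro v x y
    by_cases hxy : x = y
    · refine ⟨(v x) • 1, hBconst (v x), by simp, by simp [hxy]⟩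
    · obtain ⟨f, hfA, hfxy⟩ := hsep x y hxy
      set c : ℝ := (v y - v x) / (f y - f x) with hc
      refine ⟨(v x - c * f x) • 1 + c • f, ?_, ?_, ?_⟩
      · exact hBadd _ (hBconst _) _ (hBsmul c _ (subset_closure hfA))
      · simp
      · simp only [ContinuousMap.add_apply, ContinuousMap.smul_apply,
          ContinuousMap.one_apply, smul_eq_mul, mul_one]
        have hne : f y - f x ≠ 0 := sub_ne_zero.mpr (Ne.symm hfxy)
        have h2 : c * (f y - f x) = v y - v x := by rw [hc]; exact div_mul_cancel₀ _ hne
        linear_combination h2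
  have := ContinuousMap.sublattice_closure_eq_top B ⟨1, hBone⟩ hBinf hBsup hBsep
  rw [hB, closure_closure] at this
  rw [dense_iff_closure_eq]
  exact this
end

section
/- Fix an integer r ≥ 1. Let V be the set of all finite ℚ-linear combinations of the functions f_T, where T ranges over finite nonempty subsets of ℤ_{≥0}^r \ {0}. Then V is closed under pointwise minimum: if f, g ∈ V, then the function m ↦ min{f(m), g(m)} on ℝ_{≥0}^r belongs to V. -/
open Pointwise

/-- The nonnegative orthant `ℝ_{≥0}^r`, as a subtype of `Fin r → ℝ`. -/
def Orthant (r : ℕ) : Type := {m : Fin r → ℝ // ∀ i, 0 ≤ m i}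

/-- For a finite nonempty set `T ⊆ ℤ_{≥0}^r` of integer vectors, the function
`f_T : ℝ_{≥0}^r → ℝ`, `f_T(m) = min_{α ∈ T} (α₁ m₁ + ⋯ + α_r m_r)`. -/
noncomputable def fT {r : ℕ} (T : Finset (Fin r → ℕ)) (hT : T.Nonempty) :
    Orthant r → ℝ :=
  fun m => T.inf' hT fun α => ∑ i, (α i : ℝ) * m.1 i

/-- The set of functions `f_T` for `T` a finite nonempty subset of `ℤ_{≥0}^r \ {0}`. -/
def fTSet (r : ℕ) : Set (Orthant r → ℝ) :=
  {f | ∃ (T : Finset (Fin r → ℕ)) (hT : T.Nonempty), (0 : Fin r → ℕ) ∉ T ∧ f = fT T hT}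

namespace SpanFTAux

variable {r : ℕ}

/-- Minkowski sum: `f_{A+B} = f_A + f_B`. -/
lemma fT_add (A B : Finset (Fin r → ℕ)) (hA : A.Nonempty) (hB : B.Nonempty) (m : Orthant r) :
    fT (A + B) (hA.add hB) m = fT A hA m + fT B hB m := by
  apply le_antisymm
  · obtain ⟨α, hα, hαe⟩ := A.exists_mem_eq_inf' hA (fun α => ∑ i, (α i : ℝ) * m.1 i)
    obtain ⟨β, hβ, hβe⟩ := B.exists_mem_eq_inf' hB (fun α => ∑ i, (α i : ℝ) * m.1 i)
    have hmem : α + β ∈ A + B := Finset.add_mem_add hα hβ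
    have h1 : fT (A + B) (hA.add hB) m ≤ ∑ i, ((α + β) i : ℝ) * m.1 i :=
      Finset.inf'_le _ hmem
    refine h1.trans_eq ?_
    show (∑ i, ((α + β) i : ℝ) * m.1 i) = fT A hA m + fT B hB m
    rw [fT, fT, hαe, hβe, ← Finset.sum_add_distrib]
    apply Finset.sum_congr rfl
    intro i _
    push_cast [Pi.add_apply]
    ring
  · apply Finset.le_inf'
    intro γ hγ
    obtain ⟨α, hα, β, hβ, rfl⟩ := Finset.mem_add.mp hγ
    have h1 : fT A hA m ≤ ∑ i, (α i : ℝ) * m.1 i := Finset.inf'_le _ hα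
    have h2 : fT B hB m ≤ ∑ i, (β i : ℝ) * m.1 i := Finset.inf'_le _ hβ
    have : (∑ i, ((α + β) i : ℝ) * m.1 i)
        = (∑ i, (α i : ℝ) * m.1 i) + ∑ i, (β i : ℝ) * m.1 i := by
      rw [← Finset.sum_add_distrib]
      apply Finset.sum_congr rfl
      intro i _
      push_cast [Pi.add_apply]
      ring
    calc fT A hA m + fT B hB m ≤ _ + _ := add_le_add h1 h2
    _ = ∑ i, ((α + β) i : ℝ) * m.1 i := this.symm

/-- Scaling: `f_{k•A} = k * f_A`. -/
lemma fT_smul (k : ℕ) (A : Finset (Fin r → ℕ)) (hA : A.Nonempty) (m : Orthant r) :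
    fT (A.image (fun α => k • α)) (hA.image _) m = (k : ℝ) * fT A hA m := by
  apply le_antisymm
  · obtain ⟨α, hα, hαe⟩ := A.exists_mem_eq_inf' hA (fun α => ∑ i, (α i : ℝ) * m.1 i)
    have hmem : k • α ∈ A.image (fun α => k • α) := Finset.mem_image_of_mem _ hα
    have h1 : fT (A.image (fun α => k • α)) (hA.image _) m ≤ ∑ i, ((k • α) i : ℝ) * m.1 i :=
      Finset.inf'_le _ hmem
    refine h1.trans_eq ?_
    rw [fT, hαe, Finset.mul_sum]
    apply Finset.sum_congr rfl
    intro i _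
    push_cast [Pi.smul_apply, smul_eq_mul, Nat.cast_id]
    ring
  · apply Finset.le_inf'
    intro γ hγ
    obtain ⟨α, hα, rfl⟩ := Finset.mem_image.mp hγ
    have h1 : fT A hA m ≤ ∑ i, (α i : ℝ) * m.1 i := Finset.inf'_le _ hα
    have h2 : (k : ℝ) * fT A hA m ≤ (k : ℝ) * ∑ i, (α i : ℝ) * m.1 i :=
      mul_le_mul_of_nonneg_left h1 (by positivity)
    refine h2.trans_eq ?_
    rw [Finset.mul_sum]
    apply Finset.sum_congr rfl
    intro i _
    push_cast [Pi.smul_apply, smul_eq_mul, Nat.cast_id]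
    ring

/-- Union: `f_{A∪B} = min (f_A) (f_B)`. -/
lemma fT_union (A B : Finset (Fin r → ℕ)) (hA : A.Nonempty) (hB : B.Nonempty) (m : Orthant r) :
    fT (A ∪ B) (hA.mono Finset.subset_union_left) m = min (fT A hA m) (fT B hB m) := by
  rw [fT, Finset.inf'_union hA hB]
  rfl

lemma add_mem_fTSet {a b : Orthant r → ℝ} (ha : a ∈ fTSet r) (hb : b ∈ fTSet r) :
    a + b ∈ fTSet r := by
  obtain ⟨A, hA, hA0, rfl⟩ := ha
  obtain ⟨B, hB, hB0, rfl⟩ := hb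
  refine ⟨A + B, hA.add hB, ?_, ?_⟩
  · intro h
    obtain ⟨α, hα, β, hβ, hs⟩ := Finset.mem_add.mp h
    have : α = 0 := by
      funext i
      have h2 : α i + β i = 0 := by
        have := congrFun hs i
        simpa using this
      simpa using Nat.eq_zero_of_add_eq_zero_right h2
    exact hA0 (this ▸ hα)
  · funext m
    rw [fT_add A B hA hB]
    rfl

lemma smul_mem_fTSet {a : Orthant r → ℝ} (k : ℕ) (hk : 0 < k) (ha : a ∈ fTSet r) :
    ((k : ℚ) • a) ∈ fTSet r := by
  obtain ⟨A, hA, hA0, rfl⟩ := ha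
  refine ⟨A.image (fun α => k • α), hA.image _, ?_, ?_⟩
  · intro h
    obtain ⟨α, hα, hs⟩ := Finset.mem_image.mp h
    have : α = 0 := by
      funext i
      have h2 : k * α i = 0 := by
        have := congrFun hs i
        simpa using this
      simp only [Pi.zero_apply]
      rcases Nat.mul_eq_zero.mp h2 with h' | h'
      · omega
      · exact h'
    exact hA0 (this ▸ hα)
  · funext m
    rw [fT_smul k A hA]
    simp [Rat.smul_def]

lemma min_mem_fTSet {a b : Orthant r → ℝ} (ha : a ∈ fTSet r) (hb : b ∈ fTSet r) :
    (fun m => min (a m) (b m)) ∈ fTSet r := by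
  obtain ⟨A, hA, hA0, rfl⟩ := ha
  obtain ⟨B, hB, hB0, rfl⟩ := hb
  refine ⟨A ∪ B, hA.mono Finset.subset_union_left, ?_, ?_⟩
  · simp only [Finset.mem_union]
    rintro (h | h)
    · exact hA0 h
    · exact hB0 h
  · funext m
    rw [fT_union A B hA hB]

/-- There is at least one element in `fTSet r` when `r ≥ 1`. -/
lemma fTSet_nonempty (hr : 1 ≤ r) : ∃ e, e ∈ fTSet r := by
  refine ⟨fT {fun _ => 1} (Finset.singleton_nonempty _), {fun _ => 1},
    Finset.singleton_nonempty _, ?_, rfl⟩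
  intro h
  have := Finset.mem_singleton.mp h
  have h1 := congrFun this ⟨0, hr⟩
  simp at h1

/-- Helper: positive rational multiple of a difference of `fTSet` elements
has the normal form. -/
lemma pos_smul_diff (hr : 1 ≤ r) (s : ℚ) (hs : 0 < s) {a b : Orthant r → ℝ}
    (ha : a ∈ fTSet r) (hb : b ∈ fTSet r) :
    ∃ n : ℕ, 0 < n ∧ ∃ a' ∈ fTSet r, ∃ b' ∈ fTSet r,
      s • (a - b) = ((n : ℚ))⁻¹ • (a' - b') := by
  have hnum : 0 < s.num := Rat.num_pos.mpr hs
  set k : ℕ := s.num.toNat with hk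
  have hkpos : 0 < k := by omega
  refine ⟨s.den, s.pos, (k : ℚ) • a, smul_mem_fTSet k hkpos ha,
    (k : ℚ) • b, smul_mem_fTSet k hkpos hb, ?_⟩
  rw [smul_sub, smul_sub, smul_smul, smul_smul, ← smul_sub, ← smul_sub]
  congr 1
  rw [hk]
  have : ((s.num.toNat : ℚ)) = (s.num : ℚ) := by
    norm_cast
    omega
  rw [this]
  rw [inv_mul_eq_div]
  exact (Rat.num_div_den s).symm

/-- Every element of the span is `(1/n) (a - b)` with `a, b ∈ fTSet r`. -/
lemma span_normal_form (hr : 1 ≤ r) {f : Orthant r → ℝ}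
    (hf : f ∈ Submodule.span ℚ (fTSet r)) :
    ∃ n : ℕ, 0 < n ∧ ∃ a ∈ fTSet r, ∃ b ∈ fTSet r, f = ((n : ℚ))⁻¹ • (a - b) := by
  induction hf using Submodule.span_induction with
  | mem x hx =>
      refine ⟨1, one_pos, x + x, add_mem_fTSet hx hx, x, hx, ?_⟩
      simp
  | zero =>
      obtain ⟨e, he⟩ := fTSet_nonempty hr
      exact ⟨1, one_pos, e, he, e, he, by simp⟩
  | add x y hx hy ihx ihy =>
      obtain ⟨n, hn, a, ha, b, hb, rfl⟩ := ihx
      obtain ⟨m, hm, c, hc, d, hd, rfl⟩ := ihy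
      refine ⟨n * m, Nat.mul_pos hn hm,
        (m : ℚ) • a + (n : ℚ) • c, add_mem_fTSet (smul_mem_fTSet m hm ha) (smul_mem_fTSet n hn hc),
        (m : ℚ) • b + (n : ℚ) • d, add_mem_fTSet (smul_mem_fTSet m hm hb) (smul_mem_fTSet n hn hd),
        ?_⟩
      have hn' : (n : ℚ) ≠ 0 := by positivity
      have hm' : (m : ℚ) ≠ 0 := by positivity
      push_cast
      match_scalars <;> (field_simp; try ring)
  | smul q x hx ihx =>
      obtain ⟨n, hn, a, ha, b, hb, rfl⟩ := ihx
      rcases lt_trichotomy q 0 with hq | hq | hq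
      · have hn' : (n : ℚ) ≠ 0 := by positivity
        have : q • ((n : ℚ))⁻¹ • (a - b) = (-q / n) • (b - a) := by
          match_scalars <;> (field_simp; try ring)
        rw [this]
        exact pos_smul_diff hr _ (div_pos (by linarith) (by positivity)) hb ha
      · subst hq
        obtain ⟨e, he⟩ := fTSet_nonempty hr
        exact ⟨1, one_pos, e, he, e, he, by simp⟩
      · have : q • ((n : ℚ))⁻¹ • (a - b) = (q / n) • (a - b) := by
          rw [smul_smul, div_eq_mul_inv]
        rw [this]
        exact pos_smul_diff hr _ (div_pos hq (by positivity)) ha hb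

/-- The key real-number identity. -/
lemma min_identity (n m : ℝ) (hn : 0 < n) (hm : 0 < m) (x y z w : ℝ) :
    min (n⁻¹ * (x - y)) (m⁻¹ * (z - w))
      = (n * m)⁻¹ * (min (m * x + n * w) (n * z + m * y) - (m * y + n * w)) := by
  have key : n⁻¹ * (x - y) ≤ m⁻¹ * (z - w) ↔ m * x + n * w ≤ n * z + m * y := by
    rw [inv_mul_eq_div, inv_mul_eq_div, div_le_div_iff₀ hn hm]
    constructor <;> intro h <;> nlinarith
  rcases le_total (n⁻¹ * (x - y)) (m⁻¹ * (z - w)) with h | h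
  · rw [min_eq_left h, min_eq_left (key.mp h)]
    field_simp
    ring
  · rw [min_eq_right h]
    have h2 : n * z + m * y ≤ m * x + n * w := by
      rw [inv_mul_eq_div, inv_mul_eq_div, div_le_div_iff₀ hm hn] at h
      nlinarith
    rw [min_eq_right h2]
    field_simp
    ring

end SpanFTAux

open SpanFTAux in
/-- The ℚ-vector space `V` of finite ℚ-linear combinations of the functions `f_T`,
for `T` ranging over finite nonempty subsets of `ℤ_{≥0}^r \ {0}`, is closed under
pointwise minimum. -/
theorem span_fT_min_closed {r : ℕ} (hr : 1 ≤ r)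
    (f g : Orthant r → ℝ)
    (hf : f ∈ Submodule.span ℚ (fTSet r))
    (hg : g ∈ Submodule.span ℚ (fTSet r)) :
    (fun m => min (f m) (g m)) ∈ Submodule.span ℚ (fTSet r) := by
  obtain ⟨n, hn, a, ha, b, hb, rfl⟩ := span_normal_form hr hf
  obtain ⟨m, hm, c, hc, d, hd, rfl⟩ := span_normal_form hr hg
  -- P = m•a + n•d, Q = n•c + m•b, R = m•b + n•d
  set P : Orthant r → ℝ := (m : ℚ) • a + (n : ℚ) • d with hP
  set Q : Orthant r → ℝ := (n : ℚ) • c + (m : ℚ) • b with hQ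
  set R : Orthant r → ℝ := (m : ℚ) • b + (n : ℚ) • d with hR
  have hPmem : P ∈ fTSet r := add_mem_fTSet (smul_mem_fTSet m hm ha) (smul_mem_fTSet n hn hd)
  have hQmem : Q ∈ fTSet r := add_mem_fTSet (smul_mem_fTSet n hn hc) (smul_mem_fTSet m hm hb)
  have hRmem : R ∈ fTSet r := add_mem_fTSet (smul_mem_fTSet m hm hb) (smul_mem_fTSet n hn hd)
  have heq : (fun p => min ((((n : ℚ))⁻¹ • (a - b)) p) ((((m : ℚ))⁻¹ • (c - d)) p))
      = ((n * m : ℚ))⁻¹ • ((fun p => min (P p) (Q p)) - R) := by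
    funext p
    simp only [Pi.smul_apply, Pi.sub_apply, Pi.add_apply, Rat.smul_def]
    push_cast
    have hn' : (0 : ℝ) < n := by exact_mod_cast hn
    have hm' : (0 : ℝ) < m := by exact_mod_cast hm
    exact min_identity (n : ℝ) (m : ℝ) hn' hm' (a p) (b p) (c p) (d p)
  rw [heq]
  apply Submodule.smul_mem
  apply Submodule.sub_mem
  · exact Submodule.subset_span (min_mem_fTSet hPmem hQmem)
  · exact Submodule.subset_span hRmem
end

section
/- Let (V, E, s, t) be a connected oriented multigraph with V and E finite and V nonempty, and let ∂ : ℝ^E → ℝ^V be its incidence map. Let L : E → ℝ satisfy L(e) > 0 for all e ∈ E, let y, z ∈ V, and let (γ_j)_{j ∈ J} be a basis of the cycle space ker ∂. Then there exists a unique x ∈ ℝ^E such that ∂x = δ_y − δ_z and Σ_{e ∈ E} γ_j(e) · L(e) · x(e) = 0 for every j ∈ J. -/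
/-- The incidence map `∂ : ℝ^E → ℝ^V` of an oriented multigraph `(V, E, s, t)`:
`(∂x)(v) = Σ_{e : t(e)=v} x(e) − Σ_{e : s(e)=v} x(e)`. -/
noncomputable def incidenceMap {V E : Type*} [Fintype E] [DecidableEq V]
    (s t : E → V) : (E → ℝ) →ₗ[ℝ] (V → ℝ) where
  toFun x := fun v =>
    (∑ e ∈ Finset.univ.filter (fun e => t e = v), x e)
      - ∑ e ∈ Finset.univ.filter (fun e => s e = v), x e
  map_add' x y := by
    funext v
    simp [Finset.sum_add_distrib]
    ring
  map_smul' c x := by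
    funext v
    simp [Finset.mul_sum, mul_sub]

/-- The simple graph underlying an oriented multigraph `(V, E, s, t)`: two distinct
vertices `v, w` are adjacent whenever some edge `e` satisfies `{s(e), t(e)} = {v, w}`. -/
def underlyingGraph {V E : Type*} (s t : E → V) : SimpleGraph V where
  Adj v w := v ≠ w ∧ ∃ e, (s e = v ∧ t e = w) ∨ (s e = w ∧ t e = v)
  symm := by
    constructor
    rintro v w ⟨hne, e, he⟩
    exact ⟨hne.symm, e, he.symm⟩
  loopless := by
    constructor
    rintro v ⟨hne, -⟩
    exact hne rfl

lemma incidence_single {V E : Type*} [Fintype E] [DecidableEq V] [DecidableEq E]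
    (s t : E → V) (e : E) (c : ℝ) (v : V) :
    incidenceMap s t (Pi.single e c) v
      = (if t e = v then c else 0) - (if s e = v then c else 0) := by
  simp [incidenceMap, Pi.single_apply, Finset.sum_ite_eq', Finset.mem_filter]

lemma exists_flow_adj {V E : Type*} [Fintype E] [DecidableEq V]
    (s t : E → V) {y z : V} (h : (underlyingGraph s t).Adj y z) :
    ∃ x : E → ℝ, incidenceMap s t x
      = fun v => (if v = y then (1 : ℝ) else 0) - (if v = z then (1 : ℝ) else 0) := by
  classical
  obtain ⟨hne, e, he | he⟩ := h
  · refine ⟨Pi.single e (-1), funext fun v => ?_⟩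
    rw [incidence_single]
    simp only [he.1, he.2]
    by_cases h1 : v = y <;> by_cases h2 : v = z <;> simp_all [eq_comm]
  · refine ⟨Pi.single e 1, funext fun v => ?_⟩
    rw [incidence_single]
    simp only [he.1, he.2]
    by_cases h1 : v = y <;> by_cases h2 : v = z <;> simp_all [eq_comm]

lemma exists_flow_reachable {V E : Type*} [Fintype E] [DecidableEq V]
    (s t : E → V) {y z : V} (h : (underlyingGraph s t).Reachable y z) :
    ∃ x : E → ℝ, incidenceMap s t x
      = fun v => (if v = y then (1 : ℝ) else 0) - (if v = z then (1 : ℝ) else 0) := by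
  obtain ⟨w⟩ := h
  induction w with
  | nil => exact ⟨0, by funext v; simp⟩
  | @cons a b c hab p ih =>
      obtain ⟨x1, hx1⟩ := exists_flow_adj s t hab
      obtain ⟨x2, hx2⟩ := ih
      refine ⟨x1 + x2, funext fun v => ?_⟩
      have := congrFun hx1 v
      have := congrFun hx2 v
      simp only [map_add, Pi.add_apply, *]
      ring

noncomputable def scaleEquiv {E : Type*} [Fintype E] (L : E → ℝ) (hL : ∀ e, 0 < L e) :
    (E → ℝ) ≃ₗ[ℝ] EuclideanSpace ℝ E where
  toFun x := WithLp.toLp 2 (fun e => Real.sqrt (L e) * x e)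
  invFun x := fun e => x e / Real.sqrt (L e)
  map_add' x y := by ext e; simp [mul_add]
  map_smul' c x := by ext e; simp; ring
  left_inv x := by
    funext e
    have h : Real.sqrt (L e) ≠ 0 := Real.sqrt_ne_zero'.mpr (hL e)
    field_simp
  right_inv x := by
    ext e
    have h : Real.sqrt (L e) ≠ 0 := Real.sqrt_ne_zero'.mpr (hL e)
    field_simp

open scoped RealInnerProductSpace

lemma inner_scale {E : Type*} [Fintype E] (L : E → ℝ) (hL : ∀ e, 0 < L e) (u v : E → ℝ) :
    ⟪scaleEquiv L hL u, scaleEquiv L hL v⟫ = ∑ e, u e * L e * v e := by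
  simp only [scaleEquiv, PiLp.inner_apply, RCLike.inner_apply, conj_trivial,
    LinearEquiv.coe_mk, LinearMap.coe_mk, AddHom.coe_mk]
  exact Finset.sum_congr rfl fun e _ => by
    have h := Real.mul_self_sqrt (hL e).le
    linear_combination u e * v e * h

/-- **Existence and uniqueness of the current flow.**
Let `(V, E, s, t)` be a connected finite oriented multigraph, `L : E → ℝ` positive
edge lengths, `y, z ∈ V`, and `(γ_j)` a basis of the cycle space `ker ∂`. Then there
is a unique `x ∈ ℝ^E` with `∂x = δ_y − δ_z` and `Σ_e γ_j(e) L(e) x(e) = 0` for all `j`. -/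
theorem current_flow_exists_unique {V E : Type*} [Fintype V] [Fintype E]
    [DecidableEq V] [Nonempty V]
    (s t : E → V) (hconn : (underlyingGraph s t).Connected)
    (L : E → ℝ) (hL : ∀ e, 0 < L e)
    (y z : V) {J : Type*} (γ : J → (E → ℝ))
    (hker : ∀ j, incidenceMap s t (γ j) = 0)
    (hli : LinearIndependent ℝ γ)
    (hspan : Submodule.span ℝ (Set.range γ) = LinearMap.ker (incidenceMap s t)) :
    ∃! x : E → ℝ,
      incidenceMap s t x
          = (fun v => (if v = y then (1 : ℝ) else 0) - (if v = z then (1 : ℝ) else 0))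
        ∧ ∀ j, ∑ e, γ j e * L e * x e = 0 := by
  classical
  set D := incidenceMap s t with hD
  let φ : (E → ℝ) ≃ₗ[ℝ] EuclideanSpace ℝ E := scaleEquiv L hL
  have inner_eq : ∀ u v : E → ℝ, ⟪φ u, φ v⟫ = ∑ e, u e * L e * v e := inner_scale L hL
  set K : Submodule ℝ (E → ℝ) := LinearMap.ker D with hK
  set K' : Submodule ℝ (EuclideanSpace ℝ E) := K.map (φ : (E → ℝ) →ₗ[ℝ] EuclideanSpace ℝ E)
    with hK'
  -- characterization of the orthogonality condition
  have hchar : ∀ x : E → ℝ, (∀ j, ∑ e, γ j e * L e * x e = 0) ↔ φ x ∈ K'ᗮ := by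
    intro x
    constructor
    · intro hx
      rw [Submodule.mem_orthogonal]
      rintro u ⟨c, hc, rfl⟩
      have hcspan : c ∈ Submodule.span ℝ (Set.range γ) := hspan ▸ hc
      let l : (E → ℝ) →ₗ[ℝ] ℝ :=
        { toFun := fun u => ∑ e, u e * L e * x e
          map_add' := fun u v => by
            simp [add_mul, Finset.sum_add_distrib]
          map_smul' := fun r u => by
            simp [Finset.mul_sum]; exact Finset.sum_congr rfl fun e _ => by ring }
      have hle : Submodule.span ℝ (Set.range γ) ≤ LinearMap.ker l := by
        rw [Submodule.span_le]
        rintro _ ⟨j, rfl⟩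
        exact hx j
      have hlc : l c = 0 := hle hcspan
      show ⟪φ c, φ x⟫ = 0
      rw [inner_eq]
      exact hlc
    · intro hx j
      have hj : γ j ∈ K := by rw [hK, LinearMap.mem_ker]; exact hker j
      have h0 : ⟪φ (γ j), φ x⟫ = 0 :=
        (Submodule.mem_orthogonal K' (φ x)).mp hx _ ⟨γ j, hj, rfl⟩
      rwa [inner_eq] at h0
  -- a flow with the right boundary
  obtain ⟨x0, hx0⟩ := exists_flow_reachable s t (hconn.preconnected y z)
  obtain ⟨p, hp, q, hq, hpq⟩ := K'.exists_add_mem_mem_orthogonal (φ x0)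
  obtain ⟨cp, hcp, hcpeq⟩ := hp
  have hsymm : (φ.symm q : E → ℝ) = x0 - cp := by
    apply φ.injective
    simp only [LinearEquiv.apply_symm_apply, map_sub]
    rw [show (φ cp : EuclideanSpace ℝ E) = p from hcpeq, hpq]
    abel
  have hDq : D (φ.symm q)
      = fun v => (if v = y then (1 : ℝ) else 0) - (if v = z then (1 : ℝ) else 0) := by
    rw [hsymm, map_sub, hx0, (LinearMap.mem_ker.mp hcp : D cp = 0)]
    funext v; simp
  refine ⟨φ.symm q, ⟨hDq, ?_⟩, ?_⟩
  · exact (hchar _).mpr (by rwa [LinearEquiv.apply_symm_apply])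
  · rintro x' ⟨hx'1, hx'2⟩
    have h1 : φ x' ∈ K'ᗮ := (hchar x').mp hx'2
    have h2 : φ x' - q ∈ K'ᗮ := K'ᗮ.sub_mem h1 hq
    have hd : x' - φ.symm q ∈ K := by
      rw [hK, LinearMap.mem_ker, map_sub, hx'1, hDq]
      funext v; simp
    have h3 : φ x' - q ∈ K' := by
      refine ⟨x' - φ.symm q, hd, ?_⟩
      show φ (x' - φ.symm q) = φ x' - q
      rw [map_sub, LinearEquiv.apply_symm_apply]
    have h0 : φ x' - q = 0 := by
      have := K'.orthogonal_disjoint.le_bot ⟨h3, h2⟩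
      simpa using this
    apply φ.injective
    rw [LinearEquiv.apply_symm_apply, ← sub_eq_zero]
    exact h0
end

section
/- Let (V, E, s, t) be a connected oriented multigraph with V and E finite and V nonempty, and let ∂ : ℝ^E → ℝ^V be its incidence map. Let L : E → ℝ satisfy L(e) > 0 for all e ∈ E, let y, z ∈ V, and let (γ_j)_{j ∈ J} be a basis of the cycle space ker ∂. If x ∈ ℝ^E satisfies ∂x = δ_y − δ_z and Σ_{e ∈ E} γ_j(e) · L(e) · x(e) = 0 for every j ∈ J, then |x(e)| ≤ 1 for every edge e ∈ E. -/
/-- Key cut argument: if a flow `x` has divergence `δ_y − δ_z` and is the (scaled)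
gradient of a potential `f`, then the flow along any single edge is at most `1`. -/
lemma cut_aux {V E : Type*} [Fintype V] [Fintype E] [DecidableEq V]
    (s t : E → V) (y z : V) (L : E → ℝ) (hL : ∀ e, 0 < L e)
    (x : E → ℝ) (f : V → ℝ)
    (hdiv : ∀ v, (∑ e ∈ Finset.univ.filter (fun e => t e = v), x e)
      - (∑ e ∈ Finset.univ.filter (fun e => s e = v), x e)
      = (if v = y then (1:ℝ) else 0) - (if v = z then (1:ℝ) else 0))
    (hf : ∀ e, f (t e) - f (s e) = L e * x e) (e₀ : E) : x e₀ ≤ 1 := by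
  by_contra hgt
  push_neg at hgt
  set c := f (t e₀) with hc
  set S : Finset V := Finset.univ.filter (fun v => c ≤ f v) with hS
  -- sum the divergence identity over S
  have hsum := Finset.sum_congr rfl (fun v (_ : v ∈ S) => hdiv v)
  -- right side
  have hrhs : ∑ v ∈ S, ((if v = y then (1:ℝ) else 0) - (if v = z then (1:ℝ) else 0)) ≤ 1 := by
    rw [Finset.sum_sub_distrib, Finset.sum_ite_eq' S y (fun _ => (1:ℝ)),
      Finset.sum_ite_eq' S z (fun _ => (1:ℝ))]
    split_ifs <;> norm_num
  -- left side: flow across the cut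
  have hlhs : ∑ v ∈ S, ((∑ e ∈ Finset.univ.filter (fun e => t e = v), x e)
      - (∑ e ∈ Finset.univ.filter (fun e => s e = v), x e))
      = (∑ e ∈ Finset.univ.filter (fun e => t e ∈ S), x e)
        - ∑ e ∈ Finset.univ.filter (fun e => s e ∈ S), x e := by
    rw [Finset.sum_sub_distrib, Finset.sum_fiberwise_eq_sum_filter Finset.univ S t x,
      Finset.sum_fiberwise_eq_sum_filter Finset.univ S s x]
  set A : Finset E := Finset.univ.filter (fun e => t e ∈ S ∧ s e ∉ S) with hA
  set B : Finset E := Finset.univ.filter (fun e => s e ∈ S ∧ t e ∉ S) with hB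
  have split1 : ∑ e ∈ Finset.univ.filter (fun e => t e ∈ S), x e
      = (∑ e ∈ Finset.univ.filter (fun e => t e ∈ S ∧ s e ∈ S), x e) + ∑ e ∈ A, x e := by
    rw [← Finset.sum_filter_add_sum_filter_not (Finset.univ.filter (fun e => t e ∈ S))
      (fun e => s e ∈ S) x, Finset.filter_filter, Finset.filter_filter]
  have split2 : ∑ e ∈ Finset.univ.filter (fun e => s e ∈ S), x e
      = (∑ e ∈ Finset.univ.filter (fun e => t e ∈ S ∧ s e ∈ S), x e) + ∑ e ∈ B, x e := by
    rw [← Finset.sum_filter_add_sum_filter_not (Finset.univ.filter (fun e => s e ∈ S))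
      (fun e => t e ∈ S) x, Finset.filter_filter, Finset.filter_filter]
    congr 1
    apply Finset.sum_congr _ (fun _ _ => rfl)
    apply Finset.filter_congr
    intro e _
    simp [and_comm]
  have he₀A : e₀ ∈ A := by
    have h0 := hf e₀
    have hLe := hL e₀
    rw [hA, Finset.mem_filter]
    refine ⟨Finset.mem_univ _, ?_, ?_⟩
    · rw [hS, Finset.mem_filter]; exact ⟨Finset.mem_univ _, le_refl _⟩
    · rw [hS, Finset.mem_filter]
      push_neg
      intro _
      nlinarith
  have hAnn : ∀ e ∈ A, 0 ≤ x e := by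
    intro e he
    rw [hA, Finset.mem_filter, hS, Finset.mem_filter, Finset.mem_filter] at he
    obtain ⟨-, ⟨-, h1⟩, h2⟩ := he
    push_neg at h2
    have h3 := h2 (Finset.mem_univ _)
    have h4 := hf e
    have h5 := hL e
    nlinarith
  have hBnp : ∑ e ∈ B, x e ≤ 0 := by
    apply Finset.sum_nonpos
    intro e he
    rw [hB, Finset.mem_filter, hS, Finset.mem_filter, Finset.mem_filter] at he
    obtain ⟨-, ⟨-, h1⟩, h2⟩ := he
    push_neg at h2
    have h3 := h2 (Finset.mem_univ _)
    have h4 := hf e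
    have h5 := hL e
    nlinarith
  have hx0 : x e₀ ≤ ∑ e ∈ A, x e := Finset.single_le_sum hAnn he₀A
  rw [hlhs, split1, split2] at hsum
  linarith

/-- The "discrete gradient" map, transpose of the incidence map. -/
noncomputable def gradMap {V E : Type*} (s t : E → V) : (V → ℝ) →ₗ[ℝ] (E → ℝ) where
  toFun g := fun e => g (t e) - g (s e)
  map_add' g h := by funext e; simp; ring
  map_smul' c g := by funext e; simp [mul_sub]

lemma adjoint_identity {V E : Type*} [Fintype V] [Fintype E] [DecidableEq V]
    (s t : E → V) (u : E → ℝ) (g : V → ℝ) :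
    ∑ v, (incidenceMap s t u) v * g v = ∑ e, u e * (gradMap s t g) e := by
  simp only [incidenceMap, gradMap, LinearMap.coe_mk, AddHom.coe_mk, sub_mul, mul_sub,
    Finset.sum_sub_distrib, Finset.sum_mul]
  have gen : ∀ (r : E → V), ∑ v, ∑ e ∈ Finset.univ.filter (fun e => r e = v), u e * g v
      = ∑ e, u e * g (r e) := by
    intro r
    have step1 : ∀ v : V, ∑ e ∈ Finset.univ.filter (fun e => r e = v), u e * g v
        = ∑ e ∈ Finset.univ.filter (fun e => r e = v), u e * g (r e) := by
      intro v
      apply Finset.sum_congr rfl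
      intro e he
      rw [Finset.mem_filter] at he
      rw [he.2]
    rw [Finset.sum_congr rfl (fun v _ => step1 v),
      Finset.sum_fiberwise_eq_sum_filter Finset.univ Finset.univ r (fun e => u e * g (r e))]
    simp
  rw [gen t, gen s]

/-- A vector orthogonal to the kernel of the incidence map is a discrete gradient. -/
lemma exists_potential {V E : Type*} [Fintype V] [Fintype E] [DecidableEq V]
    (s t : E → V) (w : E → ℝ)
    (hw : ∀ u : E → ℝ, incidenceMap s t u = 0 → ∑ e, u e * w e = 0) :
    ∃ f : V → ℝ, ∀ e, f (t e) - f (s e) = w e := by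
  classical
  let eE := WithLp.linearEquiv 2 ℝ (E → ℝ)
  let eV := WithLp.linearEquiv 2 ℝ (V → ℝ)
  let A : EuclideanSpace ℝ E →ₗ[ℝ] EuclideanSpace ℝ V :=
    eV.symm.toLinearMap ∘ₗ incidenceMap s t ∘ₗ eE.toLinearMap
  let D : EuclideanSpace ℝ V →ₗ[ℝ] EuclideanSpace ℝ E :=
    eE.symm.toLinearMap ∘ₗ gradMap s t ∘ₗ eV.toLinearMap
  have inner_eq : ∀ (a b : EuclideanSpace ℝ E), (inner ℝ a b : ℝ) = ∑ e, a e * b e := by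
    intro a b
    simp [PiLp.inner_apply, RCLike.inner_apply, mul_comm]
  have inner_eqV : ∀ (a b : EuclideanSpace ℝ V), (inner ℝ a b : ℝ) = ∑ v, a v * b v := by
    intro a b
    simp [PiLp.inner_apply, RCLike.inner_apply, mul_comm]
  have hadj : ∀ (u : EuclideanSpace ℝ E) (g : EuclideanSpace ℝ V),
      (inner ℝ (A u) g : ℝ) = inner ℝ u (D g) := by
    intro u g
    rw [inner_eq, inner_eqV]
    exact adjoint_identity s t (eE u) (eV g)
  set K : Submodule ℝ (EuclideanSpace ℝ E) := LinearMap.range D with hK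
  have horth : Kᗮ ≤ LinearMap.ker A := by
    intro v hv
    rw [Submodule.mem_orthogonal] at hv
    have h1 : (inner ℝ (A v) (A v) : ℝ) = 0 := by
      rw [hadj v (A v)]
      rw [real_inner_comm]
      exact hv (D (A v)) ⟨A v, rfl⟩
    rw [LinearMap.mem_ker]
    exact inner_self_eq_zero.mp h1
  have hwK : (eE.symm w : EuclideanSpace ℝ E) ∈ Kᗮᗮ := by
    rw [Submodule.mem_orthogonal]
    intro v hv
    have hv2 : incidenceMap s t (eE v) = 0 := by
      have h := LinearMap.mem_ker.mp (horth hv)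
      simpa [A] using h
    rw [inner_eq]
    exact hw (eE v) hv2
  rw [Submodule.orthogonal_orthogonal] at hwK
  obtain ⟨g, hg⟩ := hwK
  refine ⟨eV g, fun e => ?_⟩
  have : gradMap s t (eV g) = w := by
    have := congrArg eE hg
    simpa [D, eE] using this
  exact congrFun this e

/-- **Slopes of the voltage function are bounded by 1.**
Let `(V, E, s, t)` be a connected finite oriented multigraph, `L : E → ℝ` positive
edge lengths, `y, z ∈ V`, and `(γ_j)` a basis of the cycle space `ker ∂`. If `x ∈ ℝ^E`
satisfies `∂x = δ_y − δ_z` and `Σ_e γ_j(e) L(e) x(e) = 0` for all `j`, then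
`|x(e)| ≤ 1` for every edge `e`. -/
theorem current_flow_slope_bound {V E : Type*} [Fintype V] [Fintype E]
    [DecidableEq V] [Nonempty V]
    (s t : E → V) (hconn : (underlyingGraph s t).Connected)
    (L : E → ℝ) (hL : ∀ e, 0 < L e)
    (y z : V) {J : Type*} (γ : J → (E → ℝ))
    (hker : ∀ j, incidenceMap s t (γ j) = 0)
    (hli : LinearIndependent ℝ γ)
    (hspan : Submodule.span ℝ (Set.range γ) = LinearMap.ker (incidenceMap s t)) :
    ∀ x : E → ℝ,
      incidenceMap s t x
          = (fun v => (if v = y then (1 : ℝ) else 0) - (if v = z then (1 : ℝ) else 0)) →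
      (∀ j, ∑ e, γ j e * L e * x e = 0) →
      ∀ e, |x e| ≤ 1 := by
  intro x hx hortho e
  -- orthogonality to the whole cycle space
  have hw : ∀ u : E → ℝ, incidenceMap s t u = 0 → ∑ e, u e * (L e * x e) = 0 := by
    let Φ : (E → ℝ) →ₗ[ℝ] ℝ :=
      { toFun := fun u => ∑ e, u e * (L e * x e)
        map_add' := by intro a b; simp [add_mul, Finset.sum_add_distrib]
        map_smul' := by intro c a; simp [Finset.mul_sum, mul_assoc] }
    have hrange : Set.range γ ⊆ (LinearMap.ker Φ : Set (E → ℝ)) := by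
      rintro _ ⟨j, rfl⟩
      have := hortho j
      simp only [SetLike.mem_coe, LinearMap.mem_ker, Φ, LinearMap.coe_mk, AddHom.coe_mk]
      rw [← this]
      apply Finset.sum_congr rfl
      intro e _
      ring
    have hle : Submodule.span ℝ (Set.range γ) ≤ LinearMap.ker Φ :=
      Submodule.span_le.mpr hrange
    intro u hu
    have hu' : u ∈ Submodule.span ℝ (Set.range γ) := by
      rw [hspan]; exact LinearMap.mem_ker.mpr hu
    exact LinearMap.mem_ker.mp (hle hu')
  obtain ⟨f, hf⟩ := exists_potential s t (fun e => L e * x e) hw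
  have hdiv : ∀ v, (∑ e ∈ Finset.univ.filter (fun e => t e = v), x e)
      - (∑ e ∈ Finset.univ.filter (fun e => s e = v), x e)
      = (if v = y then (1:ℝ) else 0) - (if v = z then (1:ℝ) else 0) :=
    fun v => congrFun hx v
  have hupper : x e ≤ 1 := cut_aux s t y z L hL x f hdiv hf e
  -- reversed orientation
  have hdiv' : ∀ v, (∑ e ∈ Finset.univ.filter (fun e => s e = v), (fun e => -x e) e)
      - (∑ e ∈ Finset.univ.filter (fun e => t e = v), (fun e => -x e) e)
      = (if v = y then (1:ℝ) else 0) - (if v = z then (1:ℝ) else 0) := by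
    intro v
    have h := hdiv v
    simp only [Finset.sum_neg_distrib]
    linarith
  have hf' : ∀ e, f (s e) - f (t e) = L e * (fun e => -x e) e := by
    intro e
    simp only [mul_neg, ← hf e]
    ring
  have hlower : -x e ≤ 1 := cut_aux t s y z L hL (fun e => -x e) f hdiv' hf' e
  exact abs_le.mpr ⟨by linarith, hupper⟩
end
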